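/- Let V ∈ P(n,m) and G ⊂ 𝒫ⁿ. (1) If L > 0 and G is an (m,L)-Lipschitz graph over V, then for every p ∈ G and every s > L one has (G \ {p}) \ X(p,V,s) = ∅. (2) If 0 < s < 1 and (G \ {p}) \ X(p,V,s) = ∅ for every p ∈ G, then G is an (m,L)-Lipschitz graph over V with L = s/√(1 − s²). -/

import Mathlib

open MeasureTheory Metric Set Filter
open scoped ENNReal NNReal Topology

noncomputable section

/-- Euclidean `ℝ^(n+1)`, realized as the `L²`-product `ℝⁿ × ℝ`. -/
abbrev EucP (n : ℕ) : Type := WithLp 2 (EuclideanSpace ℝ (Fin n) × ℝ)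

instance (n : ℕ) : MeasurableSpace (EucP n) := borel _
instance (n : ℕ) : BorelSpace (EucP n) := ⟨rfl⟩

/-- The parabolic space `𝒫ⁿ = ℝⁿ × ℝ`, a type synonym of `ℝⁿ × ℝ` carrying the
parabolic metric `d(p,q) = ‖p - q‖` with `‖(x,t)‖ = √(|x|² + |t|)`. -/
def Para (n : ℕ) : Type := EuclideanSpace ℝ (Fin n) × ℝ

namespace Para

variable {n : ℕ}

instance : AddCommGroup (Para n) :=
  inferInstanceAs (AddCommGroup (EuclideanSpace ℝ (Fin n) × ℝ))

instance : Module ℝ (Para n) :=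
  inferInstanceAs (Module ℝ (EuclideanSpace ℝ (Fin n) × ℝ))

/-- Build a point of `𝒫ⁿ` from a pair `(x, t)`. -/
def ofProd (p : EuclideanSpace ℝ (Fin n) × ℝ) : Para n := p

/-- The spatial (horizontal) component `x` of `p = (x,t)`. -/
def x (p : Para n) : EuclideanSpace ℝ (Fin n) :=
  (show EuclideanSpace ℝ (Fin n) × ℝ from p).1

/-- The time (vertical) component `t` of `p = (x,t)`. -/
def t (p : Para n) : ℝ := (show EuclideanSpace ℝ (Fin n) × ℝ from p).2

lemma ext' {p q : Para n} (h1 : p.x = q.x) (h2 : p.t = q.t) : p = q := by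
  have : (show EuclideanSpace ℝ (Fin n) × ℝ from p)
      = (show EuclideanSpace ℝ (Fin n) × ℝ from q) := Prod.ext h1 h2
  exact this

lemma x_sub (p q : Para n) : (p - q).x = p.x - q.x := rfl
lemma t_sub (p q : Para n) : (p - q).t = p.t - q.t := rfl
lemma x_add (p q : Para n) : (p + q).x = p.x + q.x := rfl
lemma t_add (p q : Para n) : (p + q).t = p.t + q.t := rfl
lemma x_zero : (0 : Para n).x = 0 := rfl
lemma t_zero : (0 : Para n).t = 0 := rfl

/-- The parabolic norm `‖(x,t)‖ = √(|x|² + |t|)`. -/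
def pnorm (p : Para n) : ℝ := Real.sqrt (‖p.x‖ ^ 2 + |p.t|)

lemma pnorm_zero : pnorm (0 : Para n) = 0 := by
  simp [pnorm, x_zero, t_zero]

lemma pnorm_neg (p : Para n) : pnorm (-p) = pnorm p := by
  have hx : (-p).x = -p.x := rfl
  have ht : (-p).t = -p.t := rfl
  simp [pnorm, hx, ht]

lemma pnorm_add_le (p q : Para n) : pnorm (p + q) ≤ pnorm p + pnorm q := by
  have hx : ‖(p + q).x‖ ≤ ‖p.x‖ + ‖q.x‖ := by rw [x_add]; exact norm_add_le _ _
  have ht : |(p + q).t| ≤ |p.t| + |q.t| := by rw [t_add]; exact abs_add_le _ _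
  have hB : (0:ℝ) ≤ ‖p.x‖ ^ 2 + |p.t| := by positivity
  have hC : (0:ℝ) ≤ ‖q.x‖ ^ 2 + |q.t| := by positivity
  have h1 : ‖p.x‖ ≤ Real.sqrt (‖p.x‖ ^ 2 + |p.t|) :=
    (Real.le_sqrt (norm_nonneg _) hB).mpr (le_add_of_nonneg_right (abs_nonneg _))
  have h2 : ‖q.x‖ ≤ Real.sqrt (‖q.x‖ ^ 2 + |q.t|) :=
    (Real.le_sqrt (norm_nonneg _) hC).mpr (le_add_of_nonneg_right (abs_nonneg _))
  have e1 : Real.sqrt (‖p.x‖ ^ 2 + |p.t|) ^ 2 = ‖p.x‖ ^ 2 + |p.t| := Real.sq_sqrt hB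
  have e2 : Real.sqrt (‖q.x‖ ^ 2 + |q.t|) ^ 2 = ‖q.x‖ ^ 2 + |q.t| := Real.sq_sqrt hC
  have hmul : ‖p.x‖ * ‖q.x‖ ≤
      Real.sqrt (‖p.x‖ ^ 2 + |p.t|) * Real.sqrt (‖q.x‖ ^ 2 + |q.t|) :=
    mul_le_mul h1 h2 (norm_nonneg _) (Real.sqrt_nonneg _)
  unfold pnorm
  rw [show Real.sqrt (‖p.x‖ ^ 2 + |p.t|) + Real.sqrt (‖q.x‖ ^ 2 + |q.t|)
      = Real.sqrt ((Real.sqrt (‖p.x‖ ^ 2 + |p.t|) + Real.sqrt (‖q.x‖ ^ 2 + |q.t|)) ^ 2) from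
      (Real.sqrt_sq (by positivity)).symm]
  apply Real.sqrt_le_sqrt
  have hxx : ‖(p + q).x‖ * ‖(p + q).x‖ ≤ (‖p.x‖ + ‖q.x‖) * (‖p.x‖ + ‖q.x‖) :=
    mul_le_mul hx hx (norm_nonneg _) (by positivity)
  nlinarith [norm_nonneg (p + q).x, abs_nonneg (p + q).t]

instance : MetricSpace (Para n) where
  dist p q := pnorm (p - q)
  dist_self p := by
    show pnorm (p - p) = 0
    rw [sub_self, pnorm_zero]
  dist_comm p q := by
    show pnorm (p - q) = pnorm (q - p)
    rw [← neg_sub q p, pnorm_neg]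
  dist_triangle p q r := by
    show pnorm (p - r) ≤ pnorm (p - q) + pnorm (q - r)
    have h := pnorm_add_le (p - q) (q - r)
    rwa [sub_add_sub_cancel] at h
  eq_of_dist_eq_zero := by
    intro p q h
    have h' : pnorm (p - q) = 0 := h
    have hB : (0:ℝ) ≤ ‖(p - q).x‖ ^ 2 + |(p - q).t| := by positivity
    have h0 : ‖(p - q).x‖ ^ 2 + |(p - q).t| = 0 := by
      have := (Real.sqrt_eq_zero hB).mp h'
      exact this
    have hx : ‖(p - q).x‖ ^ 2 = 0 := by nlinarith [sq_nonneg ‖(p - q).x‖, abs_nonneg (p - q).t]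
    have ht : |(p - q).t| = 0 := by nlinarith [sq_nonneg ‖(p - q).x‖, abs_nonneg (p - q).t]
    have hx' : (p - q).x = 0 := by
      have := pow_eq_zero_iff (n := 2) (by norm_num) |>.mp hx
      exact norm_eq_zero.mp this
    have ht' : (p - q).t = 0 := abs_eq_zero.mp ht
    have : p - q = 0 := ext' (by rw [hx']; rfl) (by rw [ht']; rfl)
    exact sub_eq_zero.mp this

lemma dist_def (p q : Para n) : dist p q = pnorm (p - q) := rfl

instance : MeasurableSpace (Para n) := borel (Para n)
instance : BorelSpace (Para n) := ⟨rfl⟩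

/-- The identity map from the parabolic space to Euclidean `ℝ^(n+1)`. -/
def toEuc (p : Para n) : EucP n :=
  WithLp.toLp 2 (show EuclideanSpace ℝ (Fin n) × ℝ from p)

/-- The identity map from Euclidean `ℝ^(n+1)` to the parabolic space. -/
def ofEuc (p : EucP n) : Para n := WithLp.ofLp p

/-- The identity, as a linear equivalence between the parabolic space and Euclidean
`ℝ^(n+1)`. -/
def eucEquiv : Para n ≃ₗ[ℝ] EucP n where
  toFun := toEuc
  invFun := ofEuc
  map_add' _ _ := rfl
  map_smul' _ _ := rfl
  left_inv _ := rfl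
  right_inv _ := rfl

/-- The orthogonal complement (in Euclidean `ℝ^(n+1)`) of a subspace of `𝒫ⁿ`. -/
def perp (V : Submodule ℝ (Para n)) : Submodule ℝ (Para n) :=
  Submodule.comap (eucEquiv (n := n)).toLinearMap
    ((Submodule.map (eucEquiv (n := n)).toLinearMap V)ᗮ)

/-- `H(n,m)`: the horizontal homogeneous subspaces, i.e. `m`-dimensional linear
subspaces of `ℝⁿ × {0}`. -/
def Horiz (n m : ℕ) : Set (Submodule ℝ (Para n)) :=
  {V | Module.finrank ℝ V = m ∧ ∀ p ∈ V, Para.t p = 0}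

/-- `V(n,m)`: the vertical homogeneous subspaces, i.e. `(m-1)`-dimensional linear
subspaces of `ℝⁿ × ℝ` containing the `t`-axis `{0} × ℝ`. -/
def Vert (n m : ℕ) : Set (Submodule ℝ (Para n)) :=
  {V | Module.finrank ℝ V = m - 1 ∧ ofProd (0, 1) ∈ V}

/-- `P(n,m) = H(n,m) ∪ V(n,m)`, the homogeneous subspaces of parabolic Hausdorff
dimension `m`. -/
def PSet (n m : ℕ) : Set (Submodule ℝ (Para n)) := Horiz n m ∪ Vert n m

/-- The parabolic cone `X(a,V,s) = {q : d(q - a, V) < s ‖q - a‖}`. -/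
def cone (a : Para n) (V : Set (Para n)) (s : ℝ) : Set (Para n) :=
  {q | Metric.infDist (q - a) V < s * dist q a}

/-- `G` is an `(m,L)`-Lipschitz graph over `V ∈ P(n,m)`: there are `A ⊆ V` and
`g : A → V^⊥` which is `L`-Lipschitz for the parabolic norm, with
`G = {p + g(p) : p ∈ A}`. -/
def IsLipGraphOver (n m : ℕ) (L : ℝ) (V : Submodule ℝ (Para n)) (G : Set (Para n)) : Prop :=
  V ∈ PSet n m ∧ ∃ (A : Set (Para n)) (g : Para n → Para n),
    A ⊆ (V : Set (Para n)) ∧ (∀ p ∈ A, g p ∈ perp V) ∧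
    (∀ p ∈ A, ∀ q ∈ A, pnorm (g p - g q) ≤ L * pnorm (p - q)) ∧
    G = (fun p => p + g p) '' A

/-- `G` is an `(m,L)`-Lipschitz graph (over some `V ∈ P(n,m)`). -/
def IsLipGraph (n m : ℕ) (L : ℝ) (G : Set (Para n)) : Prop :=
  ∃ V, IsLipGraphOver n m L V G

/-- `E` is `(m,L)`-rectifiable: `ℋ^m`-almost all of `E` is covered by countably many
`(m,L)`-Lipschitz graphs. -/
def MLRect (n m : ℕ) (L : ℝ) (E : Set (Para n)) : Prop :=
  ∃ G : ℕ → Set (Para n), (∀ i, IsLipGraph n m L (G i)) ∧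
    μH[(m : ℝ)] (E \ ⋃ i, G i) = 0

/-- `E` is LG `m`-rectifiable: for every `L > 0`, `ℋ^m`-almost all of `E` is covered
by countably many `(m,L)`-Lipschitz graphs. -/
def LGRect (n m : ℕ) (E : Set (Para n)) : Prop :=
  ∀ L : ℝ, 0 < L → MLRect n m L E


end Para

open Para

namespace Para

variable {k : ℕ}

lemma pnorm_nonneg (p : Para k) : 0 ≤ pnorm p := Real.sqrt_nonneg _

lemma pnorm_eq_zero_iff {p : Para k} : pnorm p = 0 ↔ p = 0 := by
  constructor
  · intro h
    have hd : dist p (0 : Para k) = 0 := by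
      rw [dist_def, sub_zero]; exact h
    exact dist_eq_zero.mp hd
  · rintro rfl; exact pnorm_zero

lemma pnorm_sq (p : Para k) : pnorm p ^ 2 = ‖p.x‖ ^ 2 + |p.t| :=
  Real.sq_sqrt (by positivity)

lemma mem_perp_iff {V : Submodule ℝ (Para k)} {w : Para k} :
    w ∈ perp V ↔ ∀ v ∈ V, (inner ℝ (toEuc v) (toEuc w) : ℝ) = 0 := by
  unfold perp
  rw [Submodule.mem_comap, Submodule.mem_orthogonal]
  constructor
  · intro h v hv
    exact h (toEuc v) ⟨v, hv, rfl⟩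
  · rintro h u ⟨v, hv, rfl⟩
    exact h v hv

lemma inner_eq (v w : Para k) :
    (inner ℝ (toEuc v) (toEuc w) : ℝ) = inner ℝ v.x w.x + v.t * w.t := by
  rw [WithLp.prod_inner_apply, RCLike.inner_apply', conj_trivial]; rfl

lemma ortho_of_PSet {mm : ℕ} {V : Submodule ℝ (Para k)} (hV : V ∈ PSet k mm)
    {v w : Para k} (hv : v ∈ V) (hw : w ∈ perp V) :
    (inner ℝ v.x w.x : ℝ) = 0 ∧ v.t * w.t = 0 := by
  have hvw : (inner ℝ v.x w.x : ℝ) + v.t * w.t = 0 := by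
    rw [← inner_eq]; exact mem_perp_iff.mp hw v hv
  rcases hV with hH | hVert
  · have hvt : v.t = 0 := hH.2 v hv
    refine ⟨?_, by simp [hvt]⟩
    simpa [hvt] using hvw
  · have h1 : (inner ℝ ((ofProd ((0 : EuclideanSpace ℝ (Fin k)), (1:ℝ))) : Para k).x w.x : ℝ)
        + ((ofProd ((0 : EuclideanSpace ℝ (Fin k)), (1:ℝ))) : Para k).t * w.t = 0 := by
      rw [← inner_eq]; exact mem_perp_iff.mp hw _ hVert.2
    have hx0 : ((ofProd ((0 : EuclideanSpace ℝ (Fin k)), (1:ℝ))) : Para k).x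
        = (0 : EuclideanSpace ℝ (Fin k)) := rfl
    have ht1 : ((ofProd ((0 : EuclideanSpace ℝ (Fin k)), (1:ℝ))) : Para k).t = 1 := rfl
    have hwt : w.t = 0 := by
      rw [hx0, ht1] at h1
      simpa using h1
    exact ⟨by simpa [hwt] using hvw, by simp [hwt]⟩

lemma pnorm_sq_add {mm : ℕ} {V : Submodule ℝ (Para k)} (hV : V ∈ PSet k mm)
    {v w : Para k} (hv : v ∈ V) (hw : w ∈ perp V) :
    pnorm (v + w) ^ 2 = pnorm v ^ 2 + pnorm w ^ 2 := by
  obtain ⟨hx, ht⟩ := ortho_of_PSet hV hv hw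
  have habs : |v.t + w.t| = |v.t| + |w.t| := by
    rcases mul_eq_zero.mp ht with h | h <;> simp [h]
  have hnx : ‖v.x + w.x‖ ^ 2 = ‖v.x‖ ^ 2 + ‖w.x‖ ^ 2 := by
    rw [norm_add_sq_real, hx]; ring
  rw [pnorm_sq, pnorm_sq, pnorm_sq, x_add, t_add, habs, hnx]; ring

lemma le_pnorm_add_left {mm : ℕ} {V : Submodule ℝ (Para k)} (hV : V ∈ PSet k mm)
    {v w : Para k} (hv : v ∈ V) (hw : w ∈ perp V) :
    pnorm v ≤ pnorm (v + w) := by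
  have h := pnorm_sq_add hV hv hw
  nlinarith [pnorm_nonneg v, pnorm_nonneg (v + w), pnorm_nonneg w]

lemma le_pnorm_add_right {mm : ℕ} {V : Submodule ℝ (Para k)} (hV : V ∈ PSet k mm)
    {v w : Para k} (hv : v ∈ V) (hw : w ∈ perp V) :
    pnorm w ≤ pnorm (v + w) := by
  have h := pnorm_sq_add hV hv hw
  nlinarith [pnorm_nonneg v, pnorm_nonneg (v + w), pnorm_nonneg w]

set_option synthInstance.maxHeartbeats 1000000 in
lemma decomp (V : Submodule ℝ (Para k)) (u : Para k) :
    ∃ v ∈ V, ∃ w ∈ perp V, u = v + w := by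
  obtain ⟨y, hy, z, hz, huyz⟩ :=
    Submodule.exists_add_mem_mem_orthogonal
      (K := Submodule.map (eucEquiv (n := k)).toLinearMap V) (toEuc u)
  obtain ⟨v0, hv0, hyv⟩ := hy
  refine ⟨v0, hv0, ofEuc z, ?_, ?_⟩
  · exact hz
  · show u = v0 + ofEuc z
    rw [← hyv] at huyz
    exact congrArg ofEuc huyz

lemma infDist_eq {mm : ℕ} {V : Submodule ℝ (Para k)} (hV : V ∈ PSet k mm)
    {v w : Para k} (hv : v ∈ V) (hw : w ∈ perp V) :
    Metric.infDist (v + w) (V : Set (Para k)) = pnorm w := by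
  apply le_antisymm
  · have h := Metric.infDist_le_dist_of_mem (x := v + w) (show v ∈ (V : Set (Para k)) from hv)
    rwa [dist_def, add_sub_cancel_left] at h
  · by_contra hlt
    push_neg at hlt
    obtain ⟨y, hy, hdy⟩ := (Metric.infDist_lt_iff ⟨0, V.zero_mem⟩).mp hlt
    rw [dist_def] at hdy
    have hsub : v + w - y = (v - y) + w := by abel
    rw [hsub] at hdy
    exact absurd hdy (not_lt.mpr (le_pnorm_add_right hV (V.sub_mem hv hy) hw))

end Para

/-- **Lemma 3.5.** Characterization of `(m,L)`-Lipschitz graphs over `V` by cones: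
(1) an `(m,L)`-Lipschitz graph over `V` avoids the complement of `X(p,V,s)` for `s > L`;
(2) if `G` avoids the complement of `X(p,V,s)` at each `p ∈ G` for some `0 < s < 1`,
then `G` is an `(m, s/√(1-s²))`-Lipschitz graph over `V`. -/
theorem lipschitz_graph_cone_characterization (n m : ℕ) (V : Submodule ℝ (Para n))
    (hV : V ∈ PSet n m) (G : Set (Para n)) :
    (∀ L s : ℝ, 0 < L → L < s → IsLipGraphOver n m L V G →
      ∀ p ∈ G, (G \ {p}) \ cone p (V : Set (Para n)) s = ∅) ∧
    (∀ s : ℝ, 0 < s → s < 1 →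
      (∀ p ∈ G, (G \ {p}) \ cone p (V : Set (Para n)) s = ∅) →
      IsLipGraphOver n m (s / Real.sqrt (1 - s ^ 2)) V G) := by
  constructor
  · -- Part (1)
    rintro L s hL hLs ⟨-, A, g, hAV, hgperp, hlip, rfl⟩ p hp
    rw [Set.eq_empty_iff_forall_notMem]
    rintro q ⟨⟨hqG, hqp⟩, hqc⟩
    obtain ⟨a, ha, rfl⟩ := hqG
    obtain ⟨b, hb, rfl⟩ := hp
    apply hqc
    show Metric.infDist ((a + g a) - (b + g b)) (V : Set (Para n))
        < s * dist (a + g a) (b + g b)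
    have hsub : (a + g a) - (b + g b) = (a - b) + (g a - g b) := by abel
    have hVm : a - b ∈ V := V.sub_mem (hAV ha) (hAV hb)
    have hPm : g a - g b ∈ perp V := (perp V).sub_mem (hgperp a ha) (hgperp b hb)
    have h1 : Metric.infDist ((a + g a) - (b + g b)) (V : Set (Para n))
        ≤ pnorm (g a - g b) := by
      have h := Metric.infDist_le_dist_of_mem (x := (a + g a) - (b + g b))
        (show a - b ∈ (V : Set (Para n)) from hVm)
      rwa [dist_def, show (a + g a) - (b + g b) - (a - b) = g a - g b by abel] at h
    have h2 : pnorm (g a - g b) ≤ L * pnorm (a - b) := hlip a ha b hb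
    have h3 : pnorm (a - b) ≤ pnorm ((a + g a) - (b + g b)) := by
      rw [hsub]; exact le_pnorm_add_left hV hVm hPm
    have h4 : 0 < pnorm ((a + g a) - (b + g b)) := by
      have := dist_pos.mpr (show (a + g a) ≠ (b + g b) from fun h => hqp h)
      rwa [dist_def] at this
    have hd : dist (a + g a) (b + g b) = pnorm ((a + g a) - (b + g b)) := rfl
    rw [hd]
    nlinarith [pnorm_nonneg (a - b)]
  · -- Part (2)
    intro s hs0 hs1 hcone
    set L := s / Real.sqrt (1 - s ^ 2) with hLdef
    have hs2 : (0:ℝ) < 1 - s ^ 2 := by nlinarith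
    have hc : 0 < Real.sqrt (1 - s ^ 2) := Real.sqrt_pos.mpr hs2
    have hcsq : Real.sqrt (1 - s ^ 2) ^ 2 = 1 - s ^ 2 := Real.sq_sqrt hs2.le
    have hL0 : 0 ≤ L := div_nonneg hs0.le hc.le
    choose v hvV w hwP hvw using decomp V
    have key : ∀ q ∈ G, ∀ q' ∈ G, pnorm (w q - w q') ≤ L * pnorm (v q - v q') := by
      intro q hq q' hq'
      by_cases hqq : q = q'
      · subst hqq
        simp only [sub_self, pnorm_zero, mul_zero]
        exact le_refl 0
      · have hmem : q ∈ cone q' (V : Set (Para n)) s := by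
          by_contra hnc
          have : q ∈ (G \ {q'}) \ cone q' (V : Set (Para n)) s := ⟨⟨hq, hqq⟩, hnc⟩
          rw [hcone q' hq'] at this
          exact this
        have hsub : q - q' = (v q - v q') + (w q - w q') := by
          calc q - q' = (v q + w q) - (v q' + w q') := by rw [← hvw q, ← hvw q']
            _ = (v q - v q') + (w q - w q') := by abel
        have hVm : v q - v q' ∈ V := V.sub_mem (hvV q) (hvV q')
        have hPm : w q - w q' ∈ perp V := (perp V).sub_mem (hwP q) (hwP q')
        have hid : Metric.infDist (q - q') (V : Set (Para n)) = pnorm (w q - w q') := by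
          rw [hsub]; exact infDist_eq hV hVm hPm
        have hlt : pnorm (w q - w q') < s * pnorm (q - q') := by
          have := hmem
          rw [Para.cone, Set.mem_setOf_eq, hid, dist_def] at this
          exact this
        have hsq : pnorm (q - q') ^ 2 = pnorm (v q - v q') ^ 2 + pnorm (w q - w q') ^ 2 := by
          rw [hsub]; exact pnorm_sq_add hV hVm hPm
        set a := pnorm (w q - w q') with ha
        set b := pnorm (v q - v q') with hb
        set d := pnorm (q - q') with hd
        have ha0 : 0 ≤ a := pnorm_nonneg _
        have hb0 : 0 ≤ b := pnorm_nonneg _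
        have hd0 : 0 ≤ d := pnorm_nonneg _
        have hsq2 : (Real.sqrt (1 - s ^ 2) * a) ^ 2 ≤ (s * b) ^ 2 := by nlinarith
        have hle : Real.sqrt (1 - s ^ 2) * a ≤ s * b := by
          have hsb : 0 ≤ s * b := mul_nonneg hs0.le hb0
          nlinarith [mul_nonneg hc.le ha0]
        rw [hLdef, div_mul_eq_mul_div, le_div_iff₀ hc]
        nlinarith
    have hinj : ∀ q ∈ G, ∀ q' ∈ G, v q = v q' → q = q' := by
      intro q hq q' hq' hvv
      have h := key q hq q' hq'
      rw [hvv, sub_self, pnorm_zero, mul_zero] at h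
      have h0 : w q - w q' = 0 := pnorm_eq_zero_iff.mp (le_antisymm h (pnorm_nonneg _))
      rw [hvw q, hvw q', hvv, sub_eq_zero.mp h0]
    haveI : Nonempty (Para n) := ⟨0⟩
    refine ⟨hV, v '' G, fun p => w (Function.invFunOn v G p), ?_, ?_, ?_, ?_⟩
    · rintro p ⟨q, hq, rfl⟩; exact hvV q
    · intro p _; exact hwP _
    · rintro p ⟨q, hq, rfl⟩ p' ⟨q', hq', rfl⟩
      have hm : Function.invFunOn v G (v q) ∈ G := Function.invFunOn_mem ⟨q, hq, rfl⟩
      have he : v (Function.invFunOn v G (v q)) = v q := Function.invFunOn_eq ⟨q, hq, rfl⟩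
      have hm' : Function.invFunOn v G (v q') ∈ G := Function.invFunOn_mem ⟨q', hq', rfl⟩
      have he' : v (Function.invFunOn v G (v q')) = v q' := Function.invFunOn_eq ⟨q', hq', rfl⟩
      have h := key _ hm _ hm'
      rwa [he, he'] at h
    · ext q
      constructor
      · intro hq
        refine ⟨v q, ⟨q, hq, rfl⟩, ?_⟩
        have hm : Function.invFunOn v G (v q) ∈ G := Function.invFunOn_mem ⟨q, hq, rfl⟩
        have he : v (Function.invFunOn v G (v q)) = v q := Function.invFunOn_eq ⟨q, hq, rfl⟩
        have heq : Function.invFunOn v G (v q) = q := hinj _ hm q hq he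
        show v q + w (Function.invFunOn v G (v q)) = q
        rw [heq, ← hvw q]
      · rintro ⟨p, ⟨q', hq', rfl⟩, rfl⟩
        have hm : Function.invFunOn v G (v q') ∈ G := Function.invFunOn_mem ⟨q', hq', rfl⟩
        have he : v (Function.invFunOn v G (v q')) = v q' := Function.invFunOn_eq ⟨q', hq', rfl⟩
        set q0 := Function.invFunOn v G (v q') with hq0
        show v q' + w q0 ∈ G
        have heq : v q' + w q0 = q0 := by
          rw [← he]
          exact (hvw q0).symm
        rw [heq]
        exact hm

end
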